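/- (Chebyshev centre problem.) Let (X,‖·‖) be a real normed space, n ≥ 2, and v_1,…,v_n ∈ X distinct. Define f(u) := max_{1≤i≤n} ‖u − v_i‖ for u ∈ X. Then: (a) ū ∈ X is a global minimizer of f if and only if there exist x*_1,…,x*_n ∈ X* such that Σ_{i=1}^n x*_i = 0, Σ_{i=1}^n ‖x*_i‖* = 1, and for every i = 1,…,n: ⟨x*_i, ū − v_i⟩ = ‖x*_i‖*·‖ū − v_i‖ and (‖ū − v_i‖ − max_{1≤j≤n} ‖ū − v_j‖)·‖x*_i‖* = 0. (b) If x*_1,…,x*_n are as in (a), then the set of all global minimizers of f equals the intersection, over those indices i with x*_i ≠ 0, of the sets {u ∈ X : ⟨x*_i, u − v_i⟩ = ‖x*_i‖* · max_{1≤j≤n} ‖u − v_j‖}. -/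

import Mathlib

set_option linter.unusedSectionVars false
set_option maxHeartbeats 1000000

open Finset NormedSpace Metric Set

section chebyshev

variable {X : Type*} [NormedAddCommGroup X] [NormedSpace ℝ X]
variable {n : ℕ} (v : Fin n → X)

lemma cheb_bdd (u : X) : BddAbove (Set.range fun i : Fin n => ‖u - v i‖) :=
  (Set.finite_range _).bddAbove

lemma cheb_le_sup [Nonempty (Fin n)] (u : X) (i : Fin n) : ‖u - v i‖ ≤ ⨆ j, ‖u - v j‖ :=
  le_ciSup (cheb_bdd v u) i

lemma cheb_attained [Nonempty (Fin n)] (u : X) : ∃ i, (⨆ j, ‖u - v j‖) = ‖u - v i‖ := by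
  obtain ⟨i, hi⟩ := Finite.exists_max fun i : Fin n => ‖u - v i‖
  exact ⟨i, le_antisymm (ciSup_le hi) (cheb_le_sup v u i)⟩

lemma cheb_key (ub : X) (xs : Fin n → (X →L[ℝ] ℝ)) (h0 : (∑ i, xs i) = 0) (w : X) :
    (∑ i, xs i (w - v i)) = ∑ i, xs i (ub - v i) := by
  have h := congrArg (fun f : X →L[ℝ] ℝ => f (w - ub)) h0
  simp only [ContinuousLinearMap.sum_apply, ContinuousLinearMap.zero_apply] at h
  have : ∀ i : Fin n, xs i (w - v i) - xs i (ub - v i) = xs i (w - ub) := by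
    intro i
    rw [← map_sub]
    congr 1
    abel
  have h2 : (∑ i, (xs i (w - v i) - xs i (ub - v i))) = 0 := by
    simp only [this]; exact h
  rw [Finset.sum_sub_distrib] at h2
  linarith

lemma cheb_ubval [Nonempty (Fin n)] (ub : X) (xs : Fin n → (X →L[ℝ] ℝ))
    (h1 : (∑ i, ‖xs i‖) = 1)
    (hal : ∀ i, xs i (ub - v i) = ‖xs i‖ * ‖ub - v i‖)
    (hcomp : ∀ i, (‖ub - v i‖ - ⨆ j, ‖ub - v j‖) * ‖xs i‖ = 0) :
    (∑ i, xs i (ub - v i)) = ⨆ j, ‖ub - v j‖ := by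
  have : ∀ i : Fin n, xs i (ub - v i) = ‖xs i‖ * ⨆ j, ‖ub - v j‖ := by
    intro i
    have := hcomp i
    have h' : ‖xs i‖ * ‖ub - v i‖ = ‖xs i‖ * ⨆ j, ‖ub - v j‖ := by nlinarith [hcomp i]
    rw [hal i, h']
  rw [Finset.sum_congr rfl fun i _ => this i, ← Finset.sum_mul, h1, one_mul]

lemma cheb_sum_le [Nonempty (Fin n)] (u : X) (xs : Fin n → (X →L[ℝ] ℝ))
    (h1 : (∑ i, ‖xs i‖) = 1) :
    (∑ i, xs i (u - v i)) ≤ ⨆ j, ‖u - v j‖ := by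
  calc (∑ i, xs i (u - v i)) ≤ ∑ i, ‖xs i‖ * ⨆ j, ‖u - v j‖ := by
        apply Finset.sum_le_sum
        intro i _
        calc xs i (u - v i) ≤ ‖xs i (u - v i)‖ := le_abs_self _
          _ ≤ ‖xs i‖ * ‖u - v i‖ := ContinuousLinearMap.le_opNorm _ _
          _ ≤ ‖xs i‖ * ⨆ j, ‖u - v j‖ :=
            mul_le_mul_of_nonneg_left (cheb_le_sup v u i) (norm_nonneg _)
    _ = ⨆ j, ‖u - v j‖ := by rw [← Finset.sum_mul, h1, one_mul]

lemma cheb_rev [Nonempty (Fin n)] (ub : X) (xs : Fin n → (X →L[ℝ] ℝ))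
    (h0 : (∑ i, xs i) = 0) (h1 : (∑ i, ‖xs i‖) = 1)
    (hal : ∀ i, xs i (ub - v i) = ‖xs i‖ * ‖ub - v i‖)
    (hcomp : ∀ i, (‖ub - v i‖ - ⨆ j, ‖ub - v j‖) * ‖xs i‖ = 0) :
    ∀ u : X, (⨆ i, ‖ub - v i‖) ≤ ⨆ i, ‖u - v i‖ := by
  intro u
  calc (⨆ i, ‖ub - v i‖) = ∑ i, xs i (ub - v i) := (cheb_ubval v ub xs h1 hal hcomp).symm
    _ = ∑ i, xs i (u - v i) := (cheb_key v ub xs h0 u).symm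
    _ ≤ ⨆ i, ‖u - v i‖ := cheb_sum_le v u xs h1


lemma cheb_core [Nonempty (Fin n)] (ub : X) (m : ℝ) (hm : 0 < m)
    (hsup : ∀ u : X, m ≤ ⨆ i, ‖u - v i‖)
    (hsupub : ∀ i, ‖ub - v i‖ ≤ m)
    (E : Fin n → WeakDual ℝ X)
    (hE1 : ∀ i (x : X), E i x ≤ ‖x‖)
    (hE2 : ∀ i, ‖ub - v i‖ = m → E i (ub - v i) = m)
    (η : ℝ) (hη : 0 < η) (hηA : ∀ i, ‖ub - v i‖ ≠ m → ‖ub - v i‖ ≤ m - η)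
    (i0 : Fin n) (hi0 : ‖ub - v i0‖ = m)
    (δ : ℝ) (hδ : 0 < δ) (F : Finset X) :
    ∃ p : (Fin n → ℝ) × (Fin n → WeakDual ℝ X),
      ((∀ i, 0 ≤ p.1 i) ∧ (∑ i, p.1 i) = 1 ∧ (∀ i, ‖ub - v i‖ ≠ m → p.1 i = 0) ∧
       (∀ i (x : X), p.2 i x ≤ ‖x‖) ∧ (∀ i, ‖ub - v i‖ = m → m - δ ≤ p.2 i (ub - v i))) ∧
      ∀ x ∈ F, |∑ i, p.1 i * p.2 i x| ≤ δ := by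
  classical
  set Good : ((Fin n → ℝ) × (Fin n → WeakDual ℝ X)) → Prop := fun p =>
    (∀ i, 0 ≤ p.1 i) ∧ (∑ i, p.1 i) = 1 ∧ (∀ i, ‖ub - v i‖ ≠ m → p.1 i = 0) ∧
    (∀ i (x : X), p.2 i x ≤ ‖x‖) ∧ (∀ i, ‖ub - v i‖ = m → m - δ ≤ p.2 i (ub - v i))
    with hGoodDef
  -- base point
  have hp0 : Good (fun i => if i = i0 then (1:ℝ) else 0, E) := by
    refine ⟨?_, ?_, ?_, hE1, ?_⟩
    · intro i; dsimp only; split <;> norm_num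
    · simp
    · intro i hi; dsimp only
      have : i ≠ i0 := fun h => hi (h ▸ hi0)
      simp [this]
    · intro i hi; dsimp only
      have := hE2 i hi
      simp only [this]
      linarith
  set D : Set (↥F → ℝ) :=
    {y | ∃ p, Good p ∧ ∀ x : ↥F, y x = ∑ i, p.1 i * p.2 i (x : X)} with hDdef
  have hDne : D.Nonempty := by
    exact ⟨fun x => ∑ i, (if i = i0 then (1:ℝ) else 0) * E i (x : X), ⟨_, hp0, fun x => rfl⟩⟩
  -- convexity of D
  have hDconv : Convex ℝ D := by
    rintro y₁ ⟨p, hp, hyp⟩ y₂ ⟨q, hq, hyq⟩ a b ha hb hab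
    obtain ⟨hp1, hp2, hp3, hp4, hp5⟩ := hp
    obtain ⟨hq1, hq2, hq3, hq4, hq5⟩ := hq
    set r : Fin n → ℝ := fun i => a * p.1 i + b * q.1 i with hrdef
    have hr0 : ∀ i, 0 ≤ r i := fun i =>
      add_nonneg (mul_nonneg ha (hp1 i)) (mul_nonneg hb (hq1 i))
    have hzero : ∀ i, r i = 0 → a * p.1 i = 0 ∧ b * q.1 i = 0 := by
      intro i hri
      have hri' : a * p.1 i + b * q.1 i = 0 := hri
      exact (add_eq_zero_iff_of_nonneg (mul_nonneg ha (hp1 i))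
        (mul_nonneg hb (hq1 i))).mp hri'
    set G : Fin n → WeakDual ℝ X := fun i =>
      if h : r i = 0 then E i
      else (r i)⁻¹ • ((a * p.1 i) • p.2 i + (b * q.1 i) • q.2 i) with hGdef
    have hGapp : ∀ i (x : X), r i ≠ 0 →
        G i x = (r i)⁻¹ * ((a * p.1 i) * p.2 i x + (b * q.1 i) * q.2 i x) := by
      intro i x h
      simp only [hGdef, dif_neg h]
      rfl
    have hGgood : Good (r, G) := by
      refine ⟨hr0, ?_, ?_, ?_, ?_⟩
      · show (∑ i, (a * p.1 i + b * q.1 i)) = 1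
        rw [Finset.sum_add_distrib, ← Finset.mul_sum, ← Finset.mul_sum, hp2, hq2]
        linarith
      · intro i hi
        show a * p.1 i + b * q.1 i = 0
        rw [hp3 i hi, hq3 i hi, mul_zero, mul_zero, add_zero]
      · intro i x
        by_cases h : r i = 0
        · show G i x ≤ ‖x‖
          simp only [hGdef, dif_pos h]; exact hE1 i x
        · show G i x ≤ ‖x‖
          rw [hGapp i x h]
          have h1 : (a * p.1 i) * p.2 i x ≤ (a * p.1 i) * ‖x‖ :=
            mul_le_mul_of_nonneg_left (hp4 i x) (mul_nonneg ha (hp1 i))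
          have h2 : (b * q.1 i) * q.2 i x ≤ (b * q.1 i) * ‖x‖ :=
            mul_le_mul_of_nonneg_left (hq4 i x) (mul_nonneg hb (hq1 i))
          have hrpos : 0 < r i := lt_of_le_of_ne (hr0 i) (Ne.symm h)
          rw [inv_mul_le_iff₀ hrpos]
          calc (a * p.1 i) * p.2 i x + (b * q.1 i) * q.2 i x
              ≤ (a * p.1 i + b * q.1 i) * ‖x‖ := by rw [add_mul]; exact add_le_add h1 h2
            _ = r i * ‖x‖ := by rw [hrdef]
      · intro i hi
        by_cases h : r i = 0
        · show m - δ ≤ G i (ub - v i)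
          simp only [hGdef, dif_pos h, hE2 i hi]; linarith
        · show m - δ ≤ G i (ub - v i)
          rw [hGapp i (ub - v i) h]
          have hrpos : 0 < r i := lt_of_le_of_ne (hr0 i) (Ne.symm h)
          rw [le_inv_mul_iff₀ hrpos]
          have h1 : (a * p.1 i) * (m - δ) ≤ (a * p.1 i) * p.2 i (ub - v i) :=
            mul_le_mul_of_nonneg_left (hp5 i hi) (mul_nonneg ha (hp1 i))
          have h2 : (b * q.1 i) * (m - δ) ≤ (b * q.1 i) * q.2 i (ub - v i) :=
            mul_le_mul_of_nonneg_left (hq5 i hi) (mul_nonneg hb (hq1 i))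
          have heq : r i * (m - δ) = (a * p.1 i) * (m - δ) + (b * q.1 i) * (m - δ) := by
            rw [hrdef]; ring
          linarith
    refine ⟨(r, G), hGgood, ?_⟩
    intro x
    simp only [Pi.add_apply, Pi.smul_apply, smul_eq_mul, hyp x, hyq x,
      Finset.mul_sum, ← Finset.sum_add_distrib]
    apply Finset.sum_congr rfl
    intro i _
    by_cases h : r i = 0
    · obtain ⟨h1, h2⟩ := hzero i h
      rw [h, zero_mul, ← mul_assoc, ← mul_assoc, h1, h2, zero_mul, zero_mul, add_zero]
    · rw [hGapp i x h]
      have hrpos : (0:ℝ) < r i := lt_of_le_of_ne (hr0 i) (Ne.symm h)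
      field_simp
  -- 0 is in the closure of D
  have hzero_mem : (0 : ↥F → ℝ) ∈ closure D := by
    by_contra h0
    obtain ⟨f, u, hfD, hfu⟩ :=
      geometric_hahn_banach_closed_point (hDconv.closure) isClosed_closure h0
    rw [map_zero] at hfu
    set c : ↥F → ℝ := fun x => f (fun j => if x = j then (1:ℝ) else 0) with hcdef
    have hf_repr : ∀ y : ↥F → ℝ, f y = ∑ x, y x * c x := by
      intro y
      conv_lhs => rw [pi_eq_sum_univ y]
      rw [map_sum]
      exact Finset.sum_congr rfl fun x _ => by rw [map_smul, smul_eq_mul, hcdef]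
    set d : X := ∑ x : ↥F, c x • (x : X) with hddef
    have hTd : ∀ p : (Fin n → ℝ) × (Fin n → WeakDual ℝ X), Good p →
        (∑ i, p.1 i * p.2 i d) < u := by
      intro p hp
      have hyD : (fun x : ↥F => ∑ i, p.1 i * p.2 i (x:X)) ∈ D := ⟨p, hp, fun x => rfl⟩
      have hlt := hfD _ (subset_closure hyD)
      rw [hf_repr] at hlt
      have heval : ∀ i, (p.2 i) d = ∑ x : ↥F, c x * p.2 i (x : X) := by
        intro i
        rw [hddef, map_sum]
        exact Finset.sum_congr rfl fun x _ => by rw [map_smul, smul_eq_mul]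
      have heq : (∑ i, p.1 i * p.2 i d)
          = ∑ x : ↥F, (∑ i, p.1 i * p.2 i (x:X)) * c x := by
        calc (∑ i, p.1 i * p.2 i d)
            = ∑ i, ∑ x : ↥F, p.1 i * (c x * p.2 i (x:X)) := by
              exact Finset.sum_congr rfl fun i _ => by rw [heval i, Finset.mul_sum]
          _ = ∑ x : ↥F, ∑ i, p.1 i * (c x * p.2 i (x:X)) := Finset.sum_comm
          _ = ∑ x : ↥F, (∑ i, p.1 i * p.2 i (x:X)) * c x := by
              refine Finset.sum_congr rfl fun x _ => ?_
              rw [Finset.sum_mul]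
              exact Finset.sum_congr rfl fun i _ => by ring
      rw [heq]
      exact hlt
    by_cases hd : d = 0
    · have hc := hTd _ hp0
      rw [hd] at hc
      simp only [map_zero, mul_zero, Finset.sum_const_zero] at hc
      linarith
    · set t : ℝ := min δ (η/2) / ‖d‖ with htdef
      have hdn : 0 < ‖d‖ := norm_pos_iff.mpr hd
      have ht : 0 < t := div_pos (lt_min hδ (by linarith)) hdn
      have htd : t * ‖d‖ ≤ δ := by
        rw [htdef, div_mul_cancel₀ _ (ne_of_gt hdn)]; exact min_le_left _ _
      have htd2 : t * ‖d‖ < η := by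
        rw [htdef, div_mul_cancel₀ _ (ne_of_gt hdn)]
        calc min δ (η/2) ≤ η/2 := min_le_right _ _
          _ < η := by linarith
      obtain ⟨j, hj⟩ := cheb_attained v (ub + t • d)
      have hjm : m ≤ ‖ub + t • d - v j‖ := hj ▸ hsup (ub + t • d)
      have hjA : ‖ub - v j‖ = m := by
        by_contra hjA
        have h1 : ‖ub + t • d - v j‖ ≤ ‖ub - v j‖ + t * ‖d‖ := by
          calc ‖ub + t • d - v j‖ = ‖(ub - v j) + t • d‖ := by
                congr 1; abel
            _ ≤ ‖ub - v j‖ + ‖t • d‖ := norm_add_le _ _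
            _ = ‖ub - v j‖ + t * ‖d‖ := by rw [norm_smul, Real.norm_of_nonneg ht.le]
        have := hηA j hjA
        linarith
      obtain ⟨g, hg1, hg2'⟩ := exists_dual_vector ℝ (ub + t • d - v j)
        (fun h => by rw [h] at hjm; linarith)
      have hg2 : g (ub + t • d - v j) = ‖ub + t • d - v j‖ := by exact_mod_cast hg2'
      have hgle : ∀ x : X, g x ≤ ‖x‖ := fun x =>
        (le_abs_self _).trans (by simpa [hg1] using g.le_opNorm x)
      have hgz : g (ub - v j) = g (ub + t • d - v j) - t * g d := by
        have hxy : ub - v j = (ub + t • d - v j) - t • d := by abel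
        rw [hxy, map_sub, map_smul, smul_eq_mul]
      have hgub : m - δ ≤ g (ub - v j) := by
        rw [hgz, hg2]
        have h1 : t * g d ≤ t * ‖d‖ := mul_le_mul_of_nonneg_left (hgle d) ht.le
        linarith
      have hgd : 0 ≤ g d := by
        by_contra hneg
        push_neg at hneg
        have h1 : t * g d < 0 := mul_neg_of_pos_of_neg ht hneg
        have h2 : g (ub - v j) ≤ m := hjA ▸ hgle (ub - v j)
        rw [hgz, hg2] at h2
        linarith
      set pg : (Fin n → ℝ) × (Fin n → WeakDual ℝ X) :=
        (fun i => if i = j then 1 else 0,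
         fun i => if i = j then StrongDual.toWeakDual g else E i) with hpgdef
      have hgW : ∀ x : X, (StrongDual.toWeakDual g) x = g x := fun x => rfl
      have hpg : Good pg := by
        refine ⟨?_, ?_, ?_, ?_, ?_⟩
        · intro i; simp only [hpgdef]; split <;> norm_num
        · simp [hpgdef]
        · intro i hi; simp only [hpgdef]
          have : i ≠ j := fun h => hi (h ▸ hjA)
          simp [this]
        · intro i x; simp only [hpgdef]
          split
          · rw [hgW]; exact hgle x
          · exact hE1 i x
        · intro i hi; simp only [hpgdef]
          split
          · rename_i h; rw [hgW]; rw [h] at hi ⊢; exact hgub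
          · rw [hE2 i hi]; linarith
      have hlt := hTd pg hpg
      have hsum : (∑ i, pg.1 i * pg.2 i d) = g d := by
        rw [Finset.sum_eq_single j]
        · simp [hpgdef, hgW]
        · intro i _ hij
          simp [hpgdef, hij]
        · intro h; exact absurd (Finset.mem_univ j) h
      rw [hsum] at hlt
      linarith
  -- extract an approximate zero point
  rw [Metric.mem_closure_iff] at hzero_mem
  obtain ⟨y, hyD, hdist⟩ := hzero_mem δ hδ
  obtain ⟨p, hp, hyp⟩ := hyD
  refine ⟨p, hp, ?_⟩
  intro x hx
  have h1 : |y ⟨x, hx⟩| ≤ ‖y‖ := by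
    have := norm_le_pi_norm y ⟨x, hx⟩
    simpa using this
  have h2 : ‖y‖ < δ := by
    have : dist (0 : ↥F → ℝ) y = ‖y‖ := by simp [dist_eq_norm]
    rwa [this] at hdist
  rw [← hyp ⟨x, hx⟩]
  exact h1.trans h2.le


lemma cheb_fwd (hn : 2 ≤ n) (hv : Function.Injective v) (ub : X)
    (hmin : ∀ u : X, (⨆ i, ‖ub - v i‖) ≤ ⨆ i, ‖u - v i‖) :
    ∃ xs : Fin n → (X →L[ℝ] ℝ),
      (∑ i, xs i) = 0 ∧ (∑ i, ‖xs i‖) = 1 ∧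
      ∀ i, xs i (ub - v i) = ‖xs i‖ * ‖ub - v i‖ ∧
        (‖ub - v i‖ - ⨆ j, ‖ub - v j‖) * ‖xs i‖ = 0 := by
  classical
  haveI : Nonempty (Fin n) := ⟨⟨0, by omega⟩⟩
  set m : ℝ := ⨆ j, ‖ub - v j‖ with hmdef
  have hsupub : ∀ i, ‖ub - v i‖ ≤ m := cheb_le_sup v ub
  have hm : 0 < m := by
    by_contra h
    push_neg at h
    have h0 : ∀ i : Fin n, ub = v i := by
      intro i
      have h1 : ‖ub - v i‖ ≤ 0 := (hsupub i).trans h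
      have h2 : ‖ub - v i‖ = 0 := le_antisymm h1 (norm_nonneg _)
      rw [norm_eq_zero, sub_eq_zero] at h2
      exact h2
    have h01 : (⟨0, by omega⟩ : Fin n) = ⟨1, by omega⟩ :=
      hv ((h0 _).symm.trans (h0 _))
    simp [Fin.ext_iff] at h01
  obtain ⟨i0, hi0'⟩ := cheb_attained v ub
  have hi0 : ‖ub - v i0‖ = m := hi0'.symm
  -- norming functionals at active indices
  have hEex : ∀ i : Fin n, ∃ e : WeakDual ℝ X, (∀ x : X, e x ≤ ‖x‖) ∧
      (‖ub - v i‖ = m → e (ub - v i) = m) := by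
    intro i
    by_cases hi : ‖ub - v i‖ = m
    · have hne : ub - v i ≠ 0 := by
        intro h; rw [h, norm_zero] at hi; linarith
      obtain ⟨g, hg1, hg2'⟩ := exists_dual_vector ℝ (ub - v i) (norm_ne_zero_iff.mpr hne)
      have hg2 : g (ub - v i) = ‖ub - v i‖ := by exact_mod_cast hg2'
      refine ⟨StrongDual.toWeakDual g, ?_, fun _ => ?_⟩
      · intro x
        show g x ≤ ‖x‖
        refine (le_abs_self _).trans ?_
        have := g.le_opNorm x
        rw [hg1, one_mul] at this
        exact (Real.norm_eq_abs (g x) ▸ this)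
      · show g (ub - v i) = m
        rw [hg2, hi]
    · refine ⟨0, fun x => ?_, fun h => absurd h hi⟩
      show (0:ℝ) ≤ ‖x‖
      exact norm_nonneg x
  choose E hE1 hE2 using hEex
  -- the gap
  set η : ℝ := Finset.univ.inf' Finset.univ_nonempty
    (fun j => if ‖ub - v j‖ = m then 1 else m - ‖ub - v j‖) with hηdef
  have hη : 0 < η := by
    rw [hηdef, Finset.lt_inf'_iff]
    intro j _
    split
    · norm_num
    · rename_i hj
      have := lt_of_le_of_ne (hsupub j) hj
      linarith
  have hηA : ∀ i, ‖ub - v i‖ ≠ m → ‖ub - v i‖ ≤ m - η := by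
    intro i hi
    have h1 : η ≤ m - ‖ub - v i‖ := by
      have h2 := Finset.inf'_le (fun j => if ‖ub - v j‖ = m then (1:ℝ) else m - ‖ub - v j‖)
        (Finset.mem_univ i)
      rw [if_neg hi] at h2
      exact h2
    linarith
  -- compactness setup
  have hc1 : ∀ i : Fin n, Continuous fun p : (Fin n → ℝ) × (Fin n → WeakDual ℝ X) => p.1 i :=
    fun i => (continuous_apply i).comp continuous_fst
  have hc2 : ∀ (i : Fin n) (x : X),
      Continuous fun p : (Fin n → ℝ) × (Fin n → WeakDual ℝ X) => p.2 i x :=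
    fun i x => (WeakDual.eval_continuous x).comp ((continuous_apply i).comp continuous_snd)
  set Z : ({δ : ℝ // 0 < δ} × Finset X) → Set ((Fin n → ℝ) × (Fin n → WeakDual ℝ X)) :=
    fun q => {p | (∀ i, 0 ≤ p.1 i) ∧ (∑ i, p.1 i) = 1 ∧
      (∀ i, ‖ub - v i‖ ≠ m → p.1 i = 0) ∧
      (∀ i (x : X), p.2 i x ≤ ‖x‖) ∧
      (∀ i, ‖ub - v i‖ = m → m - q.1.1 ≤ p.2 i (ub - v i)) ∧
      (∀ x ∈ q.2, |∑ i, p.1 i * p.2 i x| ≤ q.1.1)} with hZdef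
  have hZne : ∀ q, (Z q).Nonempty := by
    rintro ⟨⟨δ, hδ⟩, F⟩
    obtain ⟨p, ⟨g1, g2, g3, g4, g5⟩, g6⟩ :=
      cheb_core v ub m hm hmin hsupub E hE1 hE2 η hη hηA i0 hi0 δ hδ F
    exact ⟨p, g1, g2, g3, g4, g5, g6⟩
  have hZdir : Directed (· ⊇ ·) Z := by
    rintro ⟨⟨δ1, hδ1⟩, F1⟩ ⟨⟨δ2, hδ2⟩, F2⟩
    refine ⟨(⟨min δ1 δ2, lt_min hδ1 hδ2⟩, F1 ∪ F2), ?_, ?_⟩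
    · rintro p ⟨g1, g2, g3, g4, g5, g6⟩
      refine ⟨g1, g2, g3, g4, fun i hi => le_trans (by
        have := min_le_left δ1 δ2
        simp only
        linarith) (g5 i hi), fun x hx =>
        le_trans (g6 x (Finset.mem_union_left _ hx)) (min_le_left _ _)⟩
    · rintro p ⟨g1, g2, g3, g4, g5, g6⟩
      refine ⟨g1, g2, g3, g4, fun i hi => le_trans (by
        have := min_le_right δ1 δ2
        simp only
        linarith) (g5 i hi), fun x hx =>
        le_trans (g6 x (Finset.mem_union_right _ hx)) (min_le_right _ _)⟩
  have hZclosed : ∀ q, IsClosed (Z q) := by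
    rintro ⟨⟨δ, hδ⟩, F⟩
    have e1 : IsClosed {p : (Fin n → ℝ) × (Fin n → WeakDual ℝ X) | ∀ i, 0 ≤ p.1 i} := by
      rw [show {p : (Fin n → ℝ) × (Fin n → WeakDual ℝ X) | ∀ i, 0 ≤ p.1 i}
        = ⋂ i, {p | 0 ≤ p.1 i} from by ext p; simp]
      exact isClosed_iInter fun i => isClosed_le continuous_const (hc1 i)
    have e2 : IsClosed {p : (Fin n → ℝ) × (Fin n → WeakDual ℝ X) | (∑ i, p.1 i) = 1} :=
      isClosed_eq (by exact continuous_finset_sum _ fun i _ => hc1 i) continuous_const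
    have e3 : IsClosed {p : (Fin n → ℝ) × (Fin n → WeakDual ℝ X) |
        ∀ i, ‖ub - v i‖ ≠ m → p.1 i = 0} := by
      rw [show {p : (Fin n → ℝ) × (Fin n → WeakDual ℝ X) | ∀ i, ‖ub - v i‖ ≠ m → p.1 i = 0}
        = ⋂ (i) (_ : ‖ub - v i‖ ≠ m), {p | p.1 i = 0} from by ext p; simp]
      exact isClosed_iInter fun i => isClosed_iInter fun _ =>
        isClosed_eq (hc1 i) continuous_const
    have e4 : IsClosed {p : (Fin n → ℝ) × (Fin n → WeakDual ℝ X) |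
        ∀ i (x : X), p.2 i x ≤ ‖x‖} := by
      rw [show {p : (Fin n → ℝ) × (Fin n → WeakDual ℝ X) | ∀ i (x : X), p.2 i x ≤ ‖x‖}
        = ⋂ (i) (x : X), {p | p.2 i x ≤ ‖x‖} from by ext p; simp]
      exact isClosed_iInter fun i => isClosed_iInter fun x =>
        isClosed_le (hc2 i x) continuous_const
    have e5 : IsClosed {p : (Fin n → ℝ) × (Fin n → WeakDual ℝ X) |
        ∀ i, ‖ub - v i‖ = m → m - δ ≤ p.2 i (ub - v i)} := by
      rw [show {p : (Fin n → ℝ) × (Fin n → WeakDual ℝ X) |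
          ∀ i, ‖ub - v i‖ = m → m - δ ≤ p.2 i (ub - v i)}
        = ⋂ (i) (_ : ‖ub - v i‖ = m), {p | m - δ ≤ p.2 i (ub - v i)} from by ext p; simp]
      exact isClosed_iInter fun i => isClosed_iInter fun _ =>
        isClosed_le continuous_const (hc2 i _)
    have e6 : IsClosed {p : (Fin n → ℝ) × (Fin n → WeakDual ℝ X) |
        ∀ x ∈ F, |∑ i, p.1 i * p.2 i x| ≤ δ} := by
      rw [show {p : (Fin n → ℝ) × (Fin n → WeakDual ℝ X) | ∀ x ∈ F, |∑ i, p.1 i * p.2 i x| ≤ δ}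
        = ⋂ (x : X) (_ : x ∈ F), {p | |∑ i, p.1 i * p.2 i x| ≤ δ} from by ext p; simp]
      refine isClosed_iInter fun x => isClosed_iInter fun _ => ?_
      exact isClosed_le (continuous_abs.comp
        (continuous_finset_sum _ fun i _ => (hc1 i).mul (hc2 i x))) continuous_const
    have : Z (⟨δ, hδ⟩, F) = {p | ∀ i, 0 ≤ p.1 i} ∩ ({p | (∑ i, p.1 i) = 1} ∩
        ({p | ∀ i, ‖ub - v i‖ ≠ m → p.1 i = 0} ∩ ({p | ∀ i (x : X), p.2 i x ≤ ‖x‖} ∩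
        ({p | ∀ i, ‖ub - v i‖ = m → m - δ ≤ p.2 i (ub - v i)} ∩
         {p | ∀ x ∈ F, |∑ i, p.1 i * p.2 i x| ≤ δ})))) := by
      ext p
      simp only [hZdef, Set.mem_setOf_eq, Set.mem_inter_iff]
    rw [this]
    exact e1.inter (e2.inter (e3.inter (e4.inter (e5.inter e6))))
  have hZcomp : ∀ q, IsCompact (Z q) := by
    have hB := WeakDual.isCompact_closedBall (𝕜 := ℝ) (E := X) 0 1
    have hK := (isCompact_univ_pi fun _ : Fin n => isCompact_Icc (a := (0:ℝ)) (b := 1)).prod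
      (isCompact_univ_pi fun _ : Fin n => hB)
    intro q
    refine hK.of_isClosed_subset (hZclosed q) ?_
    rintro p ⟨g1, g2, g3, g4, g5, g6⟩
    constructor
    · rw [Set.mem_univ_pi]
      intro i
      refine ⟨g1 i, ?_⟩
      calc p.1 i ≤ ∑ j, p.1 j := Finset.single_le_sum (fun j _ => g1 j) (Finset.mem_univ i)
        _ = 1 := g2
    · rw [Set.mem_univ_pi]
      intro i
      simp only [Set.mem_preimage, Metric.mem_closedBall, dist_zero_right]
      refine ContinuousLinearMap.opNorm_le_bound _ zero_le_one ?_
      intro x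
      rw [one_mul]
      have hpos : p.2 i x ≤ ‖x‖ := g4 i x
      have hneg : -(p.2 i x) ≤ ‖x‖ := by
        have := g4 i (-x)
        rw [map_neg, norm_neg] at this
        exact this
      show |p.2 i x| ≤ ‖x‖
      rw [abs_le]
      constructor <;> linarith
  haveI : Nonempty ({δ : ℝ // 0 < δ} × Finset X) := ⟨(⟨1, one_pos⟩, ∅)⟩
  obtain ⟨p, hp⟩ := IsCompact.nonempty_iInter_of_directed_nonempty_isCompact_isClosed
    Z hZdir hZne hZcomp hZclosed
  simp only [Set.mem_iInter] at hp
  obtain ⟨h1, h2, h3, h4, -, -⟩ := hp (⟨1, one_pos⟩, ∅)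
  have h5 : ∀ i, ‖ub - v i‖ = m → p.2 i (ub - v i) = m := by
    intro i hi
    refine le_antisymm (by rw [← hi]; exact h4 i _) ?_
    by_contra hlt
    push_neg at hlt
    have hδ : 0 < (m - p.2 i (ub - v i)) / 2 := by linarith
    have := (hp (⟨_, hδ⟩, ∅)).2.2.2.2.1 i hi
    simp only at this
    linarith
  have h6 : ∀ x : X, (∑ i, p.1 i * p.2 i x) = 0 := by
    intro x
    by_contra hne
    have hδ : 0 < |∑ i, p.1 i * p.2 i x| / 2 := by positivity
    have := (hp (⟨_, hδ⟩, {x})).2.2.2.2.2 x (Finset.mem_singleton_self x)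
    have habs : 0 < |∑ i, p.1 i * p.2 i x| := abs_pos.mpr hne
    linarith
  -- construct xs
  have hWapp : ∀ (i : Fin n) (x : X), (WeakDual.toStrongDual (p.2 i)) x = p.2 i x :=
    fun i x => rfl
  have hnorm1 : ∀ i, ‖ub - v i‖ = m → ‖WeakDual.toStrongDual (p.2 i)‖ = 1 := by
    intro i hi
    refine le_antisymm ?_ ?_
    · refine ContinuousLinearMap.opNorm_le_bound _ zero_le_one ?_
      intro x
      rw [one_mul, hWapp]
      have hneg : -(p.2 i x) ≤ ‖x‖ := by
        have := h4 i (-x); rw [map_neg, norm_neg] at this; exact this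
      show |p.2 i x| ≤ ‖x‖
      rw [abs_le]; exact ⟨by linarith, h4 i x⟩
    · have hle := (WeakDual.toStrongDual (p.2 i)).le_opNorm (ub - v i)
      rw [hWapp, h5 i hi, hi, Real.norm_eq_abs, abs_of_pos hm] at hle
      by_contra hcon
      push_neg at hcon
      have h' := mul_lt_mul_of_pos_right hcon hm
      rw [one_mul] at h'
      linarith
  have hxn : ∀ i, ‖p.1 i • WeakDual.toStrongDual (p.2 i)‖ = p.1 i := by
    intro i
    by_cases hi : ‖ub - v i‖ = m
    · rw [norm_smul, Real.norm_of_nonneg (h1 i), hnorm1 i hi, mul_one]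
    · rw [h3 i hi, zero_smul, norm_zero]
  refine ⟨fun i => p.1 i • WeakDual.toStrongDual (p.2 i), ?_, ?_, ?_⟩
  · ext x
    simp only [ContinuousLinearMap.sum_apply, ContinuousLinearMap.zero_apply,
      ContinuousLinearMap.smul_apply, smul_eq_mul]
    exact h6 x
  · rw [Finset.sum_congr rfl fun i _ => hxn i]
    exact h2
  · intro i
    constructor
    · by_cases hi : ‖ub - v i‖ = m
      · have happ : (p.1 i • WeakDual.toStrongDual (p.2 i)) (ub - v i)
            = p.1 i * p.2 i (ub - v i) := by
          simp only [ContinuousLinearMap.smul_apply, smul_eq_mul]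
          rfl
        rw [happ, h5 i hi, hxn i, hi]
      · have hz : p.1 i • WeakDual.toStrongDual (p.2 i) = 0 := by
          rw [h3 i hi, zero_smul]
        show (p.1 i • WeakDual.toStrongDual (p.2 i)) (ub - v i)
            = ‖p.1 i • WeakDual.toStrongDual (p.2 i)‖ * ‖ub - v i‖
        rw [hz, ContinuousLinearMap.zero_apply, norm_zero, zero_mul]
    · by_cases hi : ‖ub - v i‖ = m
      · rw [hi, sub_self, zero_mul]
      · rw [hxn i, h3 i hi, mul_zero]


lemma cheb_partb [Nonempty (Fin n)] (ub : X) (xs : Fin n → (X →L[ℝ] ℝ))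
    (hmin : ∀ u : X, (⨆ i, ‖ub - v i‖) ≤ ⨆ i, ‖u - v i‖)
    (h0 : (∑ i, xs i) = 0) (h1 : (∑ i, ‖xs i‖) = 1)
    (hac : ∀ i, xs i (ub - v i) = ‖xs i‖ * ‖ub - v i‖ ∧
        (‖ub - v i‖ - ⨆ j, ‖ub - v j‖) * ‖xs i‖ = 0) :
    {u : X | ∀ w : X, (⨆ i, ‖u - v i‖) ≤ ⨆ i, ‖w - v i‖} =
        ⋂ i, ⋂ (_ : xs i ≠ 0),
          {u : X | xs i (u - v i) = ‖xs i‖ * ⨆ j, ‖u - v j‖} := by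
  have hub : (∑ i, xs i (ub - v i)) = ⨆ j, ‖ub - v j‖ :=
    cheb_ubval v ub xs h1 (fun i => (hac i).1) (fun i => (hac i).2)
  ext u
  simp only [Set.mem_setOf_eq, Set.mem_iInter]
  constructor
  · intro hu
    -- u is a minimizer, so sup_u = sup_ub
    have hMu : (⨆ j, ‖u - v j‖) = ⨆ j, ‖ub - v j‖ := le_antisymm (hu ub) (hmin u)
    -- sum identity
    have hsum : (∑ i, xs i (u - v i)) = ∑ i, ‖xs i‖ * ⨆ j, ‖u - v j‖ := by
      rw [cheb_key v ub xs h0 u, hub, ← Finset.sum_mul, h1, one_mul, hMu]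
    -- termwise nonneg differences summing to zero
    have hterm : ∀ i ∈ Finset.univ, (‖xs i‖ * ⨆ j, ‖u - v j‖) - xs i (u - v i) = 0 := by
      rw [← Finset.sum_eq_zero_iff_of_nonneg]
      · rw [Finset.sum_sub_distrib, hsum, sub_self]
      · intro i _
        have : xs i (u - v i) ≤ ‖xs i‖ * ⨆ j, ‖u - v j‖ :=
          calc xs i (u - v i) ≤ ‖xs i (u - v i)‖ := le_abs_self _
            _ ≤ ‖xs i‖ * ‖u - v i‖ := ContinuousLinearMap.le_opNorm _ _
            _ ≤ ‖xs i‖ * ⨆ j, ‖u - v j‖ :=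
              mul_le_mul_of_nonneg_left (cheb_le_sup v u i) (norm_nonneg _)
        linarith
    intro i _
    have := hterm i (Finset.mem_univ i)
    linarith
  · intro h
    have hall : ∀ i, xs i (u - v i) = ‖xs i‖ * ⨆ j, ‖u - v j‖ := by
      intro i
      by_cases hi : xs i = 0
      · simp [hi]
      · exact h i hi
    have hsum : (∑ i, xs i (u - v i)) = ⨆ j, ‖u - v j‖ := by
      rw [Finset.sum_congr rfl fun i _ => hall i, ← Finset.sum_mul, h1, one_mul]
    have : (⨆ j, ‖u - v j‖) = ⨆ j, ‖ub - v j‖ := by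
      rw [← hsum, cheb_key v ub xs h0 u, hub]
    intro w
    rw [this]
    exact hmin w


end chebyshev

open Finset

theorem stmt_18 {X : Type*} [NormedAddCommGroup X] [NormedSpace ℝ X]
    (n : ℕ) (hn : 2 ≤ n) (v : Fin n → X) (hv : Function.Injective v) :
    (∀ ub : X,
      (∀ u : X, (⨆ i, ‖ub - v i‖) ≤ ⨆ i, ‖u - v i‖) ↔
        ∃ xs : Fin n → (X →L[ℝ] ℝ),
          (∑ i, xs i) = 0 ∧ (∑ i, ‖xs i‖) = 1 ∧
          ∀ i, xs i (ub - v i) = ‖xs i‖ * ‖ub - v i‖ ∧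
            (‖ub - v i‖ - ⨆ j, ‖ub - v j‖) * ‖xs i‖ = 0) ∧
    (∀ ub : X, ∀ xs : Fin n → (X →L[ℝ] ℝ),
      (∀ u : X, (⨆ i, ‖ub - v i‖) ≤ ⨆ i, ‖u - v i‖) →
      (∑ i, xs i) = 0 → (∑ i, ‖xs i‖) = 1 →
      (∀ i, xs i (ub - v i) = ‖xs i‖ * ‖ub - v i‖ ∧
        (‖ub - v i‖ - ⨆ j, ‖ub - v j‖) * ‖xs i‖ = 0) →
      {u : X | ∀ w : X, (⨆ i, ‖u - v i‖) ≤ ⨆ i, ‖w - v i‖} =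
        ⋂ i, ⋂ (_ : xs i ≠ 0),
          {u : X | xs i (u - v i) = ‖xs i‖ * ⨆ j, ‖u - v j‖}) := by
  haveI : Nonempty (Fin n) := ⟨⟨0, by omega⟩⟩
  constructor
  · intro ub
    constructor
    · intro hmin
      exact cheb_fwd v hn hv ub hmin
    · rintro ⟨xs, h0, h1, hac⟩
      exact cheb_rev v ub xs h0 h1 (fun i => (hac i).1) (fun i => (hac i).2)
  · intro ub xs hmin h0 h1 hac
    exact cheb_partb v ub xs hmin h0 h1 hac
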